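/- Let S^n, N_e^n, N_z^n be mutually independent random vectors with i.i.d. components S_i ~ N(0,σ_s), N_{e,i} ~ N(0,σ_e), N_{z,i} ~ N(0,σ_z), where σ_s, σ_e, σ_z > 0. Then for every measurable estimator f : ℝ^n × ℝ^n → ℝ^n, the per-symbol mean-square error of estimating N_e^n from the pair (N_z^n − N_e^n, S^n + N_e^n) satisfies D_n := (1/n) Σ_{i=1}^n E[(N_{e,i} − f_i(N_z^n − N_e^n, S^n + N_e^n))²] ≥ σ_z σ_s σ_e / (σ_s σ_z + σ_z σ_e + σ_s σ_e). -/

import Mathlib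

open MeasureTheory ProbabilityTheory

noncomputable section

namespace ISAC

open Real
open scoped NNReal ENNReal

section Aux

lemma integrable_sq_mul_exp_neg_mul_sq {b : ℝ} (hb : 0 < b) :
    Integrable (fun x : ℝ => x ^ 2 * rexp (-b * x ^ 2)) := by
  have h2 : (0:ℝ) < b / 2 := by linarith
  refine Integrable.mono' ((integrable_exp_neg_mul_sq h2).const_mul (2 / b)) ?_ ?_
  · exact ((measurable_id.pow_const 2).mul
      ((measurable_id.pow_const 2).const_mul (-b)).exp).aestronglyMeasurable
  · refine Filter.Eventually.of_forall fun x => ?_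
    have hxe : x ^ 2 ≤ 2 / b * rexp (b / 2 * x ^ 2) := by
      have h1 : b / 2 * x ^ 2 ≤ rexp (b / 2 * x ^ 2) := by
        have := Real.add_one_le_exp (b / 2 * x ^ 2)
        nlinarith [sq_nonneg x]
      calc x ^ 2 = 2 / b * (b / 2 * x ^ 2) := by field_simp
      _ ≤ 2 / b * rexp (b / 2 * x ^ 2) := by
          apply mul_le_mul_of_nonneg_left h1; positivity
    have : x ^ 2 * rexp (-b * x ^ 2) ≤ 2 / b * rexp (-(b / 2) * x ^ 2) := by
      have := mul_le_mul_of_nonneg_right hxe (le_of_lt (Real.exp_pos (-b * x ^ 2)))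
      calc x ^ 2 * rexp (-b * x ^ 2) ≤ 2 / b * rexp (b / 2 * x ^ 2) * rexp (-b * x ^ 2) := this
      _ = 2 / b * rexp (-(b / 2) * x ^ 2) := by
          rw [mul_assoc, ← Real.exp_add]; ring_nf
    rw [Real.norm_eq_abs, abs_of_nonneg (by positivity)]
    exact this

lemma integral_sq_mul_exp_neg_mul_sq {b : ℝ} (hb : 0 < b) :
    ∫ x : ℝ, x ^ 2 * rexp (-b * x ^ 2) = √(π / b) / (2 * b) := by
  have hb' : b ≠ 0 := hb.ne'
  have hu : ∀ x : ℝ, HasDerivAt (fun y : ℝ => y) ((fun _ : ℝ => (1:ℝ)) x) x :=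
    fun x => hasDerivAt_id x
  have hv : ∀ x : ℝ, HasDerivAt (fun y : ℝ => -(2*b)⁻¹ * rexp (-b * y ^ 2))
      ((fun y : ℝ => y * rexp (-b * y ^ 2)) x) x := by
    intro x
    have h1 : HasDerivAt (fun y : ℝ => -b * y ^ 2) (-b * (2 * x)) x := by
      simpa using ((hasDerivAt_pow 2 x).const_mul (-b))
    have h2 := (h1.exp).const_mul (-(2*b)⁻¹)
    refine h2.congr_deriv ?_
    have hk : (2*b)⁻¹ * (2*b) = 1 := inv_mul_cancel₀ (by positivity)
    beta_reduce
    linear_combination (x * rexp (-b * x ^ 2)) * hk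
  have huv' : Integrable ((fun y : ℝ => y) * fun y : ℝ => y * rexp (-b * y ^ 2)) := by
    have := integrable_sq_mul_exp_neg_mul_sq hb
    refine this.congr ?_
    refine Filter.Eventually.of_forall fun x => ?_
    simp [Pi.mul_apply]; ring
  have hu'v : Integrable ((fun _ : ℝ => (1:ℝ)) * fun y : ℝ => -(2*b)⁻¹ * rexp (-b * y ^ 2)) := by
    have := ((integrable_exp_neg_mul_sq hb).const_mul (-(2*b)⁻¹))
    refine this.congr ?_
    exact Filter.Eventually.of_forall fun x => by simp [Pi.mul_apply]
  have huv : Integrable ((fun y : ℝ => y) * fun y : ℝ => -(2*b)⁻¹ * rexp (-b * y ^ 2)) := by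
    have := ((integrable_mul_exp_neg_mul_sq hb).const_mul (-(2*b)⁻¹))
    refine this.congr ?_
    refine Filter.Eventually.of_forall fun x => ?_
    simp [Pi.mul_apply]; ring
  have key := integral_mul_deriv_eq_deriv_mul_of_integrable (fun x _ => hu x) (fun x _ => hv x) huv' hu'v huv
  have hL : ∫ x : ℝ, x * (x * rexp (-b * x ^ 2)) = ∫ x : ℝ, x ^ 2 * rexp (-b * x ^ 2) := by
    congr 1; funext x; ring
  have hR : ∫ x : ℝ, (1:ℝ) * (-(2*b)⁻¹ * rexp (-b * x ^ 2)) = -(2*b)⁻¹ * √(π / b) := by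
    simp_rw [one_mul]
    rw [MeasureTheory.integral_const_mul, integral_gaussian]
  rw [hL] at key
  rw [hR] at key
  rw [key]
  ring

lemma gauss_density_lintegral {v : ℝ≥0} (hv : v ≠ 0) {h : ℝ → ℝ≥0∞} (hh : Measurable h) :
    ∫⁻ x, h x ∂gaussianReal 0 v
      = ∫⁻ x, h x * ENNReal.ofReal (gaussianPDFReal 0 v x) ∂volume := by
  rw [gaussianReal_of_var_ne_zero 0 hv,
    lintegral_withDensity_eq_lintegral_mul _ (measurable_gaussianPDF 0 v) hh]
  exact lintegral_congr fun x => by simp [gaussianPDF, mul_comm]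

lemma lintegral_sq_gaussianReal {v : ℝ≥0} (hv : v ≠ 0) :
    ∫⁻ x, ENNReal.ofReal (x ^ 2) ∂gaussianReal 0 v = ENNReal.ofReal (v : ℝ) := by
  have hv' : (0:ℝ) < v := lt_of_le_of_ne v.coe_nonneg (by exact_mod_cast (Ne.symm hv))
  have hb : (0:ℝ) < (2 * (v:ℝ))⁻¹ := by positivity
  have hm : Measurable fun x : ℝ => ENNReal.ofReal (x ^ 2) := by fun_prop
  rw [gauss_density_lintegral hv hm]
  have hpt : ∀ x : ℝ, ENNReal.ofReal (x ^ 2) * ENNReal.ofReal (gaussianPDFReal 0 v x)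
      = ENNReal.ofReal ((√(2 * π * v))⁻¹ * (x ^ 2 * rexp (-(2 * (v:ℝ))⁻¹ * x ^ 2))) := by
    intro x
    rw [← ENNReal.ofReal_mul (sq_nonneg x)]
    congr 1
    simp only [gaussianPDFReal, sub_zero]
    rw [show -x ^ 2 / (2 * (v:ℝ)) = -(2 * (v:ℝ))⁻¹ * x ^ 2 by field_simp]
    ring
  simp_rw [hpt]
  have hint : Integrable (fun x : ℝ => (√(2 * π * v))⁻¹ * (x ^ 2 * rexp (-(2 * (v:ℝ))⁻¹ * x ^ 2))) :=
    (integrable_sq_mul_exp_neg_mul_sq hb).const_mul _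
  rw [← ofReal_integral_eq_lintegral_ofReal hint
    (Filter.Eventually.of_forall fun x => by positivity)]
  congr 1
  rw [MeasureTheory.integral_const_mul, integral_sq_mul_exp_neg_mul_sq hb]
  have h2v : (0:ℝ) < 2 * π * v := by positivity
  have : π / (2 * (v:ℝ))⁻¹ = 2 * π * v := by field_simp
  rw [this]
  rw [show (2 * (2 * (v:ℝ))⁻¹) = (v:ℝ)⁻¹ by field_simp]
  rw [div_eq_mul_inv, inv_inv, ← mul_assoc, inv_mul_cancel₀ (by positivity : √(2 * π * (v:ℝ)) ≠ 0), one_mul]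

lemma le_lintegral_add_sq_gaussianReal {v : ℝ≥0} (hv : v ≠ 0) (C : ℝ) :
    ENNReal.ofReal (v : ℝ) ≤ ∫⁻ x, ENNReal.ofReal ((x + C) ^ 2) ∂gaussianReal 0 v := by
  have hneg : (gaussianReal 0 v).map (fun x : ℝ => -x) = gaussianReal 0 v := by
    have := gaussianReal_map_const_mul (μ := 0) (v := v) (-1)
    rw [show ((fun x : ℝ => -1 * x)) = (fun x : ℝ => -x) by funext x; ring] at this
    rw [this]
    norm_num
  have hmeas : ∀ D : ℝ, Measurable fun x : ℝ => ENNReal.ofReal ((x + D) ^ 2) := fun D =>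
    ENNReal.measurable_ofReal.comp ((measurable_id.add_const D).pow_const 2)
  set I := ∫⁻ x, ENNReal.ofReal ((x + C) ^ 2) ∂gaussianReal 0 v with hI
  have hI2 : I = ∫⁻ x, ENNReal.ofReal ((-x + C) ^ 2) ∂gaussianReal 0 v := by
    conv_lhs => rw [hI, ← hneg]
    rw [lintegral_map (hmeas C) measurable_neg]
  have hsum : I + I = ∫⁻ x, (ENNReal.ofReal ((x + C) ^ 2) + ENNReal.ofReal ((-x + C) ^ 2))
      ∂gaussianReal 0 v := by
    rw [lintegral_add_left (hmeas C)]
    rw [← hI2]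
  have hge : ∀ x : ℝ, ENNReal.ofReal ((x + C) ^ 2) + ENNReal.ofReal ((-x + C) ^ 2)
      ≥ 2 * ENNReal.ofReal (x ^ 2) := by
    intro x
    rw [← ENNReal.ofReal_add (sq_nonneg _) (sq_nonneg _), two_mul,
      ← ENNReal.ofReal_add (sq_nonneg _) (sq_nonneg _)]
    apply ENNReal.ofReal_le_ofReal
    nlinarith [sq_nonneg C]
  have hm : Measurable fun x : ℝ => ENNReal.ofReal (x ^ 2) := by fun_prop
  have h2 : 2 * ENNReal.ofReal (v:ℝ) ≤ 2 * I := by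
    rw [two_mul I, hsum]
    calc (2:ℝ≥0∞) * ENNReal.ofReal (v:ℝ)
        = ∫⁻ x, 2 * ENNReal.ofReal (x ^ 2) ∂gaussianReal 0 v := by
          rw [lintegral_const_mul 2 hm, lintegral_sq_gaussianReal hv]
      _ ≤ _ := lintegral_mono fun x => hge x
  exact (ENNReal.mul_le_mul_iff_right (by norm_num) (by norm_num)).mp h2

lemma measurePreserving_updatePeel {ι : Type*} [Fintype ι] [DecidableEq ι] {β : ι → Type*}
    [∀ i, MeasurableSpace (β i)] (μ : ∀ i, Measure (β i)) [∀ i, IsProbabilityMeasure (μ i)]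
    (i : ι) :
    MeasurePreserving (fun p : β i × (∀ j, β j) => Function.update p.2 i p.1)
      ((μ i).prod (Measure.pi μ)) (Measure.pi μ) := by
  have hmeas : Measurable fun p : β i × (∀ j, β j) => Function.update p.2 i p.1 :=
    measurable_update'.comp measurable_swap
  refine ⟨hmeas, ?_⟩
  refine (Measure.pi_eq fun s hs => ?_).symm
  rw [Measure.map_apply hmeas (MeasurableSet.univ_pi hs)]
  have hpre : (fun p : β i × (∀ j, β j) => Function.update p.2 i p.1) ⁻¹' (Set.pi Set.univ s)
      = (s i) ×ˢ (Set.pi Set.univ (Function.update s i Set.univ)) := by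
    ext ⟨x, y⟩
    simp only [Set.mem_preimage, Set.mem_pi, Set.mem_univ, forall_true_left, Set.mem_prod]
    constructor
    · intro h
      refine ⟨by simpa using h i, fun j => ?_⟩
      rcases eq_or_ne j i with rfl | hj
      · simp
      · simpa [Function.update_of_ne hj] using h j
    · rintro ⟨h1, h2⟩ j
      rcases eq_or_ne j i with rfl | hj
      · simpa using h1
      · simpa [Function.update_of_ne hj] using h2 j
  rw [hpre, Measure.prod_prod, Measure.pi_pi]
  have hupd : ∀ j, μ j (Function.update s i Set.univ j)
      = Function.update (fun j => μ j (s j)) i 1 j := by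
    intro j
    rcases eq_or_ne j i with rfl | hj
    · simp
    · simp [Function.update_of_ne hj]
  rw [Finset.prod_congr rfl fun j _ => hupd j,
    Finset.prod_update_of_mem (Finset.mem_univ i), one_mul, ← Finset.erase_eq]
  exact Finset.mul_prod_erase Finset.univ (fun j => μ j (s j)) (Finset.mem_univ i)

lemma measurePreserving_transpose {α β γ δ : Type*} [MeasurableSpace α] [MeasurableSpace β]
    [MeasurableSpace γ] [MeasurableSpace δ] (μa : Measure α) (μb : Measure β) (μc : Measure γ)
    (μd : Measure δ) [SFinite μa] [SFinite μb] [SFinite μc] [SFinite μd] :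
    MeasurePreserving (fun p : (α × β) × (γ × δ) => ((p.1.1, p.2.1), (p.1.2, p.2.2)))
      ((μa.prod μb).prod (μc.prod μd)) ((μa.prod μc).prod (μb.prod μd)) := by
  have h1 := measurePreserving_prodAssoc μa μb (μc.prod μd)
  have h2 := ((measurePreserving_prodAssoc μb μc μd).symm MeasurableEquiv.prodAssoc)
  have h2' := (MeasurePreserving.id μa).prod h2
  have h3 := (MeasurePreserving.id μa).prod
    ((Measure.measurePreserving_swap (μ := μb) (ν := μc)).prod (MeasurePreserving.id μd))
  have h4 := (MeasurePreserving.id μa).prod (measurePreserving_prodAssoc μc μb μd)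
  have h5 := ((measurePreserving_prodAssoc μa μc (μb.prod μd)).symm MeasurableEquiv.prodAssoc)
  have total := (h5.comp (h4.comp (h3.comp (h2'.comp h1))))
  have heq : ((⇑MeasurableEquiv.prodAssoc.symm) ∘
        ((Prod.map id ⇑(MeasurableEquiv.prodAssoc)) ∘
          ((Prod.map id (Prod.map Prod.swap id)) ∘
            ((Prod.map id ⇑(MeasurableEquiv.prodAssoc.symm)) ∘
              (⇑MeasurableEquiv.prodAssoc)))))
      = (fun p : (α × β) × (γ × δ) => ((p.1.1, p.2.1), (p.1.2, p.2.2))) := by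
    funext p
    obtain ⟨⟨a, b⟩, ⟨c, d⟩⟩ := p
    rfl
  rw [← heq]
  exact total

lemma measurePreserving_T (q₁ q₂ : ℝ) :
    MeasurePreserving (fun p : ℝ × ℝ × ℝ =>
        (p.2.1 + (q₁ * p.1 - (p.2.2 + (q₁ * p.1 + q₂ * p.2.1))),
          (p.2.2 + (q₁ * p.1 + q₂ * p.2.1),
            p.1 + (p.2.2 + (q₁ * p.1 + q₂ * p.2.1)))))
      ((volume : Measure ℝ).prod ((volume : Measure ℝ).prod (volume : Measure ℝ)))
      ((volume : Measure ℝ).prod ((volume : Measure ℝ).prod (volume : Measure ℝ))) := by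
  have vol2 : Measure (ℝ × ℝ) := (volume : Measure ℝ).prod volume
  -- T₁ : (a,(b,v)) ↦ (a,(b, v + (q₁ a + q₂ b)))
  have hT1 : MeasurePreserving
      (fun p : ℝ × (ℝ × ℝ) => (p.1, (p.2.1, p.2.2 + (q₁ * p.1 + q₂ * p.2.1))))
      ((volume : Measure ℝ).prod ((volume : Measure ℝ).prod volume))
      ((volume : Measure ℝ).prod ((volume : Measure ℝ).prod volume)) := by
    refine (MeasurePreserving.id volume).skew_product (g := fun (a : ℝ) (q : ℝ × ℝ) => (q.1, q.2 + (q₁ * a + q₂ * q.1))) ?_ ?_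
    · fun_prop
    · refine Filter.Eventually.of_forall fun a => ?_
      have : MeasurePreserving (fun q : ℝ × ℝ => (q.1, q.2 + (q₁ * a + q₂ * q.1)))
          ((volume : Measure ℝ).prod volume) ((volume : Measure ℝ).prod volume) := by
        refine (MeasurePreserving.id volume).skew_product
          (g := fun (b : ℝ) (y : ℝ) => y + (q₁ * a + q₂ * b)) (by fun_prop) ?_
        exact Filter.Eventually.of_forall fun b =>
          map_add_right_eq_self volume (q₁ * a + q₂ * b)
      exact this.map_eq
  -- T₂ : (a,(b,e)) ↦ (a, (b + (q₁ a - e), e))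
  have hT2 : MeasurePreserving
      (fun p : ℝ × (ℝ × ℝ) => (p.1, (p.2.1 + (q₁ * p.1 - p.2.2), p.2.2)))
      ((volume : Measure ℝ).prod ((volume : Measure ℝ).prod volume))
      ((volume : Measure ℝ).prod ((volume : Measure ℝ).prod volume)) := by
    refine (MeasurePreserving.id volume).skew_product
      (g := fun (a : ℝ) (q : ℝ × ℝ) => (q.1 + (q₁ * a - q.2), q.2)) (by fun_prop) ?_
    refine Filter.Eventually.of_forall fun a => ?_
    have hshear : MeasurePreserving (fun q : ℝ × ℝ => (q.1, q.2 + (q₁ * a - q.1)))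
        ((volume : Measure ℝ).prod volume) ((volume : Measure ℝ).prod volume) := by
      refine (MeasurePreserving.id volume).skew_product
        (g := fun (e : ℝ) (y : ℝ) => y + (q₁ * a - e)) (by fun_prop) ?_
      exact Filter.Eventually.of_forall fun e => map_add_right_eq_self volume (q₁ * a - e)
    have : MeasurePreserving (fun q : ℝ × ℝ => (q.1 + (q₁ * a - q.2), q.2))
        ((volume : Measure ℝ).prod volume) ((volume : Measure ℝ).prod volume) := by
      have comp := (Measure.measurePreserving_swap (μ := (volume : Measure ℝ)) (ν := volume)).comp
        (hshear.comp (Measure.measurePreserving_swap (μ := (volume : Measure ℝ)) (ν := volume)))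
      have : (Prod.swap ∘ ((fun q : ℝ × ℝ => (q.1, q.2 + (q₁ * a - q.1))) ∘ Prod.swap))
          = fun q : ℝ × ℝ => (q.1 + (q₁ * a - q.2), q.2) := by
        funext q; obtain ⟨x, y⟩ := q; rfl
      rwa [this] at comp
    exact this.map_eq
  -- T₃ : (a,(s,e)) ↦ (a + e, (s,e))
  have hT3 : MeasurePreserving
      (fun p : ℝ × (ℝ × ℝ) => (p.1 + p.2.2, p.2))
      ((volume : Measure ℝ).prod ((volume : Measure ℝ).prod volume))
      ((volume : Measure ℝ).prod ((volume : Measure ℝ).prod volume)) := by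
    have hskew : MeasurePreserving
        (fun p : (ℝ × ℝ) × ℝ => (p.1, p.2 + p.1.2))
        (((volume : Measure ℝ).prod volume).prod volume)
        (((volume : Measure ℝ).prod volume).prod volume) := by
      refine (MeasurePreserving.id ((volume : Measure ℝ).prod volume)).skew_product
        (g := fun (q : ℝ × ℝ) (y : ℝ) => y + q.2) (by fun_prop) ?_
      exact Filter.Eventually.of_forall fun q => map_add_right_eq_self volume q.2
    have comp := (Measure.measurePreserving_swap
        (μ := (volume : Measure ℝ).prod volume) (ν := (volume : Measure ℝ))).comp
      (hskew.comp (Measure.measurePreserving_swap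
        (μ := (volume : Measure ℝ)) (ν := (volume : Measure ℝ).prod volume)))
    have : (Prod.swap ∘ ((fun p : (ℝ × ℝ) × ℝ => (p.1, p.2 + p.1.2)) ∘ Prod.swap))
        = fun p : ℝ × (ℝ × ℝ) => (p.1 + p.2.2, p.2) := by
      funext p; obtain ⟨a, ⟨s, e⟩⟩ := p; rfl
    rwa [this] at comp
  -- T₄ : (z,(s,e)) ↦ (s,(e,z))
  have hT4 : MeasurePreserving
      (fun p : ℝ × (ℝ × ℝ) => (p.2.1, (p.2.2, p.1)))
      ((volume : Measure ℝ).prod ((volume : Measure ℝ).prod volume))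
      ((volume : Measure ℝ).prod ((volume : Measure ℝ).prod volume)) := by
    have comp := (measurePreserving_prodAssoc (volume : Measure ℝ) (volume : Measure ℝ) (volume : Measure ℝ)).comp
      (Measure.measurePreserving_swap (μ := (volume : Measure ℝ)) (ν := (volume : Measure ℝ).prod volume))
    have : ((⇑MeasurableEquiv.prodAssoc) ∘ Prod.swap)
        = fun p : ℝ × (ℝ × ℝ) => (p.2.1, (p.2.2, p.1)) := by
      funext p; obtain ⟨z, ⟨s, e⟩⟩ := p; rfl
    rwa [this] at comp
  have total := hT4.comp (hT3.comp (hT2.comp hT1))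
  have heq : ((fun p : ℝ × (ℝ × ℝ) => (p.2.1, (p.2.2, p.1))) ∘
      ((fun p : ℝ × (ℝ × ℝ) => (p.1 + p.2.2, p.2)) ∘
        ((fun p : ℝ × (ℝ × ℝ) => (p.1, (p.2.1 + (q₁ * p.1 - p.2.2), p.2.2))) ∘
          (fun p : ℝ × (ℝ × ℝ) => (p.1, (p.2.1, p.2.2 + (q₁ * p.1 + q₂ * p.2.1)))))))
      = fun p : ℝ × ℝ × ℝ =>
        (p.2.1 + (q₁ * p.1 - (p.2.2 + (q₁ * p.1 + q₂ * p.2.1))),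
          (p.2.2 + (q₁ * p.1 + q₂ * p.2.1),
            p.1 + (p.2.2 + (q₁ * p.1 + q₂ * p.2.1)))) := by
    funext p; obtain ⟨a, ⟨b, v⟩⟩ := p; rfl
  rwa [heq] at total

lemma lintegral_gauss_triple_eq (u v w : ℝ≥0) (hu : u ≠ 0) (hv : v ≠ 0) (hw : w ≠ 0)
    {F : ℝ × ℝ × ℝ → ℝ≥0∞} (hF : Measurable F) :
    ∫⁻ p, F p ∂((gaussianReal 0 u).prod ((gaussianReal 0 v).prod (gaussianReal 0 w))) =
      ∫⁻ p : ℝ × ℝ × ℝ,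
        F p * ENNReal.ofReal (gaussianPDFReal 0 u p.1 *
          (gaussianPDFReal 0 v p.2.1 * gaussianPDFReal 0 w p.2.2))
        ∂((volume : Measure ℝ).prod ((volume : Measure ℝ).prod (volume : Measure ℝ))) := by
  have hρu := measurable_gaussianPDFReal 0 u
  have hρv := measurable_gaussianPDFReal 0 v
  have hρw := measurable_gaussianPDFReal 0 w
  have hFmul : Measurable fun p : ℝ × ℝ × ℝ =>
      F p * ENNReal.ofReal (gaussianPDFReal 0 u p.1 *
        (gaussianPDFReal 0 v p.2.1 * gaussianPDFReal 0 w p.2.2)) := by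
    apply hF.mul
    apply ENNReal.measurable_ofReal.comp
    exact (hρu.comp measurable_fst).mul
      ((hρv.comp (measurable_fst.comp measurable_snd)).mul
        (hρw.comp (measurable_snd.comp measurable_snd)))
  rw [lintegral_prod _ hF.aemeasurable, lintegral_prod _ hFmul.aemeasurable]
  have houter : Measurable fun x : ℝ =>
      ∫⁻ q, F (x, q) ∂((gaussianReal 0 v).prod (gaussianReal 0 w)) := by
    exact Measurable.lintegral_prod_right' (f := fun p : ℝ × (ℝ × ℝ) => F p) hF
  rw [gauss_density_lintegral hu houter]
  refine lintegral_congr fun x => ?_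
  have hFx : Measurable fun q : ℝ × ℝ => F (x, q) := hF.comp measurable_prodMk_left
  -- expand inner integral over the Gaussian pair
  have inner1 : ∫⁻ q, F (x, q) ∂((gaussianReal 0 v).prod (gaussianReal 0 w))
      = ∫⁻ y, ∫⁻ z, F (x, (y, z)) ∂gaussianReal 0 w ∂gaussianReal 0 v :=
    lintegral_prod _ hFx.aemeasurable
  have inner2 : ∀ y : ℝ, ∫⁻ z, F (x, (y, z)) ∂gaussianReal 0 w
      = ∫⁻ z, F (x, (y, z)) * ENNReal.ofReal (gaussianPDFReal 0 w z) ∂volume := fun y =>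
    gauss_density_lintegral hw (hF.comp (measurable_prodMk_left.comp measurable_prodMk_left))
  have hinner3m : Measurable fun y : ℝ =>
      ∫⁻ z, F (x, (y, z)) * ENNReal.ofReal (gaussianPDFReal 0 w z) ∂volume := by
    apply Measurable.lintegral_prod_right' (f := fun q : ℝ × ℝ =>
      F (x, (q.1, q.2)) * ENNReal.ofReal (gaussianPDFReal 0 w q.2))
    exact (hF.comp (measurable_prodMk_left.comp (measurable_fst.prodMk measurable_snd))).mul
      (ENNReal.measurable_ofReal.comp (hρw.comp measurable_snd))
  calc (∫⁻ q, F (x, q) ∂((gaussianReal 0 v).prod (gaussianReal 0 w)))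
        * ENNReal.ofReal (gaussianPDFReal 0 u x)
      = (∫⁻ y, (∫⁻ z, F (x, (y, z)) * ENNReal.ofReal (gaussianPDFReal 0 w z) ∂volume)
          * ENNReal.ofReal (gaussianPDFReal 0 v y) ∂volume)
        * ENNReal.ofReal (gaussianPDFReal 0 u x) := by
        rw [inner1]
        congr 1
        rw [lintegral_congr inner2]
        exact gauss_density_lintegral hv hinner3m
    _ = ∫⁻ q : ℝ × ℝ, F (x, q) * ENNReal.ofReal (gaussianPDFReal 0 u x *
          (gaussianPDFReal 0 v q.1 * gaussianPDFReal 0 w q.2))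
          ∂((volume : Measure ℝ).prod (volume : Measure ℝ)) := by
        rw [lintegral_prod (μ := (volume : Measure ℝ)) (ν := (volume : Measure ℝ)) _ ?hm]
        case hm =>
          exact ((hF.comp (measurable_prodMk_left.comp (measurable_fst.prodMk measurable_snd))).mul
            (ENNReal.measurable_ofReal.comp ((measurable_const.mul
              ((hρv.comp measurable_fst).mul (hρw.comp measurable_snd)))))).aemeasurable
        have hm3 : Measurable fun y : ℝ =>
            (∫⁻ z, F (x, (y, z)) * ENNReal.ofReal (gaussianPDFReal 0 w z) ∂volume)
              * ENNReal.ofReal (gaussianPDFReal 0 v y) :=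
          hinner3m.mul (ENNReal.measurable_ofReal.comp hρv)
        rw [← lintegral_mul_const _ hm3]
        refine lintegral_congr fun y => ?_
        have hm2 : Measurable fun z : ℝ =>
            F (x, (y, z)) * ENNReal.ofReal (gaussianPDFReal 0 w z) :=
          (hF.comp (measurable_prodMk_left.comp measurable_prodMk_left)).mul
            (ENNReal.measurable_ofReal.comp hρw)
        rw [← lintegral_mul_const _ hm2]
        rw [← lintegral_mul_const _ (hm2.mul_const _)]
        refine lintegral_congr fun z => ?_
        rw [ENNReal.ofReal_mul (gaussianPDFReal_nonneg 0 u x),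
          ENNReal.ofReal_mul (gaussianPDFReal_nonneg 0 v y)]
        ring

lemma pdf_identity (σs σe σz : ℝ≥0) (hs : σs ≠ 0) (he : σe ≠ 0) (hz : σz ≠ 0) (a b v : ℝ) :
    gaussianPDFReal 0 σs
        ((1 - (σz : ℝ) * σe / ((σs : ℝ) * σz + (σz : ℝ) * σe + (σs : ℝ) * σe)) * b - v) *
      (gaussianPDFReal 0 σe
          (-(σe : ℝ) / ((σz : ℝ) + σe) * a +
            (σz : ℝ) * σe / ((σs : ℝ) * σz + (σz : ℝ) * σe + (σs : ℝ) * σe) * b + v) *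
        gaussianPDFReal 0 σz
          ((1 + -(σe : ℝ) / ((σz : ℝ) + σe)) * a +
            (σz : ℝ) * σe / ((σs : ℝ) * σz + (σz : ℝ) * σe + (σs : ℝ) * σe) * b + v)) =
    gaussianPDFReal 0 (σz + σe) a *
      (gaussianPDFReal 0 ((σs * σz + σz * σe + σs * σe) / (σz + σe)) b *
        gaussianPDFReal 0 (σs * σz * σe / (σs * σz + σz * σe + σs * σe)) v) := by
  have hA : (0:ℝ) < σs := NNReal.coe_pos.mpr (pos_iff_ne_zero.mpr hs)
  have hB : (0:ℝ) < σe := NNReal.coe_pos.mpr (pos_iff_ne_zero.mpr he)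
  have hC : (0:ℝ) < σz := NNReal.coe_pos.mpr (pos_iff_ne_zero.mpr hz)
  set A := (σs : ℝ)
  set B := (σe : ℝ)
  set C := (σz : ℝ)
  have hΔ : (0:ℝ) < A * C + C * B + A * B := by positivity
  have hva : (0:ℝ) < C + B := by positivity
  have cva : ((σz + σe : ℝ≥0) : ℝ) = C + B := by push_cast; ring
  have cvb : (((σs * σz + σz * σe + σs * σe) / (σz + σe) : ℝ≥0) : ℝ)
      = (A * C + C * B + A * B) / (C + B) := by push_cast; ring
  have cvv : ((σs * σz * σe / (σs * σz + σz * σe + σs * σe) : ℝ≥0) : ℝ)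
      = A * C * B / (A * C + C * B + A * B) := by push_cast; ring
  simp only [gaussianPDFReal, sub_zero, cva, cvb, cvv]
  have key : ∀ k1 k2 k3 x1 x2 x3 : ℝ,
      (k1⁻¹ * rexp x1) * ((k2⁻¹ * rexp x2) * (k3⁻¹ * rexp x3))
        = (k1 * (k2 * k3))⁻¹ * rexp (x1 + (x2 + x3)) := by
    intros k1 k2 k3 x1 x2 x3
    rw [Real.exp_add, Real.exp_add, mul_inv, mul_inv]
    ring
  rw [key, key]
  have hπ := Real.pi_pos
  congr 1
  · -- constants
    congr 1
    rw [← Real.sqrt_mul (by positivity), ← Real.sqrt_mul (by positivity),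
      ← Real.sqrt_mul (by positivity), ← Real.sqrt_mul (by positivity)]
    congr 1
    field_simp
    ring
  · -- exponents
    congr 1
    field_simp
    ring

lemma core_bound (σs σe σz : ℝ≥0) (hs : σs ≠ 0) (he : σe ≠ 0) (hz : σz ≠ 0)
    (g : ℝ × ℝ → ℝ) (hg : Measurable g) :
    ENNReal.ofReal
        ((σz * σs * σe : ℝ) / ((σs : ℝ) * σz + (σz : ℝ) * σe + (σs : ℝ) * σe)) ≤
      ∫⁻ p : ℝ × ℝ × ℝ,
        ENNReal.ofReal ((p.2.1 - g (p.2.2 - p.2.1, p.1 + p.2.1)) ^ 2)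
        ∂((gaussianReal 0 σs).prod ((gaussianReal 0 σe).prod (gaussianReal 0 σz))) := by
  -- NNReal parameters of the rotated Gaussians
  set va : ℝ≥0 := σz + σe with hva_def
  set vb : ℝ≥0 := (σs * σz + σz * σe + σs * σe) / (σz + σe) with hvb_def
  set vv : ℝ≥0 := σs * σz * σe / (σs * σz + σz * σe + σs * σe) with hvv_def
  have hΔ : σs * σz + σz * σe + σs * σe ≠ 0 := by
    simp [add_eq_zero, mul_eq_zero, hs, he, hz]
  have hva : va ≠ 0 := by simp [hva_def, add_eq_zero, he, hz]
  have hvb : vb ≠ 0 := by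
    rw [hvb_def, div_ne_zero_iff]
    exact ⟨hΔ, hva⟩
  have hvv : vv ≠ 0 := by
    rw [hvv_def, div_ne_zero_iff]
    exact ⟨by simp [mul_eq_zero, hs, he, hz], hΔ⟩
  -- real shear coefficients
  set q₁ : ℝ := -(σe : ℝ) / ((σz : ℝ) + σe) with hq₁
  set q₂ : ℝ := (σz : ℝ) * σe / ((σs : ℝ) * σz + (σz : ℝ) * σe + (σs : ℝ) * σe) with hq₂
  -- the integrands
  set F : ℝ × ℝ × ℝ → ℝ≥0∞ :=
    fun p => ENNReal.ofReal ((p.2.1 - g (p.2.2 - p.2.1, p.1 + p.2.1)) ^ 2) with hF_def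
  have hFm : Measurable F := by
    apply ENNReal.measurable_ofReal.comp
    apply Measurable.pow_const
    exact (measurable_fst.comp measurable_snd).sub (hg.comp
      (((measurable_snd.comp measurable_snd).sub (measurable_fst.comp measurable_snd)).prodMk
        (measurable_fst.add (measurable_fst.comp measurable_snd))))
  set F' : ℝ × ℝ × ℝ → ℝ≥0∞ :=
    fun p => ENNReal.ofReal
      ((p.2.2 + (q₁ * p.1 + q₂ * p.2.1 - g (p.1, q₁ * p.1 + p.2.1))) ^ 2) with hF'_def
  have hF'm : Measurable F' := by
    apply ENNReal.measurable_ofReal.comp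
    apply Measurable.pow_const
    apply (measurable_snd.comp measurable_snd).add
    exact ((measurable_fst.const_mul q₁).add
        ((measurable_fst.comp measurable_snd).const_mul q₂)).sub
      (hg.comp (measurable_fst.prodMk
        ((measurable_fst.const_mul q₁).add (measurable_fst.comp measurable_snd))))
  set T : ℝ × ℝ × ℝ → ℝ × ℝ × ℝ := fun p =>
    (p.2.1 + (q₁ * p.1 - (p.2.2 + (q₁ * p.1 + q₂ * p.2.1))),
      (p.2.2 + (q₁ * p.1 + q₂ * p.2.1),
        p.1 + (p.2.2 + (q₁ * p.1 + q₂ * p.2.1)))) with hT_def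
  have mpT := measurePreserving_T q₁ q₂
  -- step 1: to Lebesgue with density
  have step1 := lintegral_gauss_triple_eq σs σe σz hs he hz hFm
  -- step 2: change of variables
  have hGm : Measurable fun p : ℝ × ℝ × ℝ =>
      F p * ENNReal.ofReal (gaussianPDFReal 0 σs p.1 *
        (gaussianPDFReal 0 σe p.2.1 * gaussianPDFReal 0 σz p.2.2)) := by
    apply hFm.mul
    apply ENNReal.measurable_ofReal.comp
    exact ((measurable_gaussianPDFReal 0 σs).comp measurable_fst).mul
      (((measurable_gaussianPDFReal 0 σe).comp (measurable_fst.comp measurable_snd)).mul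
        ((measurable_gaussianPDFReal 0 σz).comp (measurable_snd.comp measurable_snd)))
  have step2 := (mpT.lintegral_comp hGm).symm
  -- step 3: pointwise identification
  have step3 : ∫⁻ p : ℝ × ℝ × ℝ,
      (fun p => F p * ENNReal.ofReal (gaussianPDFReal 0 σs p.1 *
        (gaussianPDFReal 0 σe p.2.1 * gaussianPDFReal 0 σz p.2.2))) (T p)
      ∂((volume : Measure ℝ).prod ((volume : Measure ℝ).prod (volume : Measure ℝ)))
      = ∫⁻ p : ℝ × ℝ × ℝ,
      F' p * ENNReal.ofReal (gaussianPDFReal 0 va p.1 *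
        (gaussianPDFReal 0 vb p.2.1 * gaussianPDFReal 0 vv p.2.2))
      ∂((volume : Measure ℝ).prod ((volume : Measure ℝ).prod (volume : Measure ℝ))) := by
    refine lintegral_congr fun p => ?_
    obtain ⟨a, b, v⟩ := p
    have hTv : T (a, (b, v)) =
        (b + (q₁ * a - (v + (q₁ * a + q₂ * b))),
          (v + (q₁ * a + q₂ * b), a + (v + (q₁ * a + q₂ * b)))) := rfl
    rw [hTv]
    refine congrArg₂ (· * ·) ?_ ?_
    · -- F part
      simp only [hF_def, hF'_def]
      refine congrArg ENNReal.ofReal ?_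
      have harg : ((a + (v + (q₁ * a + q₂ * b)) - (v + (q₁ * a + q₂ * b)) : ℝ),
          (b + (q₁ * a - (v + (q₁ * a + q₂ * b))) + (v + (q₁ * a + q₂ * b)) : ℝ))
          = ((a : ℝ), (q₁ * a + b : ℝ)) := by
        rw [Prod.mk.injEq]
        constructor <;> ring
      rw [harg]
      ring
    · -- density part
      refine congrArg ENNReal.ofReal ?_
      have hclean1 : (b + (q₁ * a - (v + (q₁ * a + q₂ * b))) : ℝ) = (1 - q₂) * b - v := by ring
      have hclean3 : (a + (v + (q₁ * a + q₂ * b)) : ℝ) = (1 + q₁) * a + q₂ * b + v := by ring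
      have hclean2 : (v + (q₁ * a + q₂ * b) : ℝ) = q₁ * a + q₂ * b + v := by ring
      rw [hclean1, hclean3, hclean2, hq₁, hq₂, hva_def, hvb_def, hvv_def]
      exact pdf_identity σs σe σz hs he hz a b v
  -- step 4: back to the rotated Gaussian product measure
  have step4 := (lintegral_gauss_triple_eq va vb vv hva hvb hvv hF'm).symm
  -- assemble
  rw [step1, step2, step3, step4]
  -- step 5: lower bound via Fubini
  have hexp : ∫⁻ p, F' p ∂((gaussianReal 0 va).prod ((gaussianReal 0 vb).prod (gaussianReal 0 vv)))
      = ∫⁻ a, (∫⁻ b, (∫⁻ v, F' (a, (b, v)) ∂gaussianReal 0 vv) ∂gaussianReal 0 vb)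
          ∂gaussianReal 0 va := by
    rw [lintegral_prod _ hF'm.aemeasurable]
    refine lintegral_congr fun a => ?_
    exact lintegral_prod _ (hF'm.comp measurable_prodMk_left).aemeasurable
  rw [hexp]
  have hinner : ∀ a b : ℝ, ENNReal.ofReal (vv : ℝ)
      ≤ ∫⁻ v, F' (a, (b, v)) ∂gaussianReal 0 vv := by
    intro a b
    have := le_lintegral_add_sq_gaussianReal hvv (q₁ * a + q₂ * b - g (a, q₁ * a + b))
    exact this
  have hconst : ENNReal.ofReal
      ((σz * σs * σe : ℝ) / ((σs : ℝ) * σz + (σz : ℝ) * σe + (σs : ℝ) * σe))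
      = ENNReal.ofReal (vv : ℝ) := by
    congr 1
    rw [hvv_def]
    push_cast
    ring
  rw [hconst]
  calc ENNReal.ofReal (vv : ℝ)
      = ∫⁻ _, ENNReal.ofReal (vv : ℝ) ∂gaussianReal 0 va := by simp
    _ ≤ _ := by
        refine lintegral_mono fun a => ?_
        calc ENNReal.ofReal (vv : ℝ)
            = ∫⁻ _, ENNReal.ofReal (vv : ℝ) ∂gaussianReal 0 vb := by simp
          _ ≤ _ := lintegral_mono fun b => hinner a b

end Aux

/-- The joint law of `(S^n, N_e^n, N_z^n)`: mutually independent vectors with i.i.d.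
centered Gaussian components of variances `σ_s`, `σ_e`, `σ_z`. -/
def gaussTriple (σs σe σz : NNReal) (n : ℕ) :
    Measure ((Fin n → ℝ) × (Fin n → ℝ) × (Fin n → ℝ)) :=
  (Measure.pi fun _ : Fin n => gaussianReal 0 σs).prod
    ((Measure.pi fun _ : Fin n => gaussianReal 0 σe).prod
      (Measure.pi fun _ : Fin n => gaussianReal 0 σz))

/-- **Converse bound for state sensing with noisy encoder CSI.** Let `S^n, N_e^n, N_z^n`
be mutually independent with i.i.d. components `S_i ~ N(0,σ_s)`, `N_{e,i} ~ N(0,σ_e)`,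
`N_{z,i} ~ N(0,σ_z)`. For every measurable estimator `f` of `N_e^n` from
`(N_z^n − N_e^n, S^n + N_e^n)`, the per-symbol mean-square error satisfies
`D_n ≥ σ_z σ_s σ_e / (σ_s σ_z + σ_z σ_e + σ_s σ_e)`. -/
theorem gaussian_sensing_converse
    (σs σe σz : NNReal) (hσs : 0 < σs) (hσe : 0 < σe) (hσz : 0 < σz)
    (n : ℕ) (hn : 0 < n)
    (f : (Fin n → ℝ) × (Fin n → ℝ) → Fin n → ℝ) (hf : Measurable f) :
    ENNReal.ofReal
        ((σz * σs * σe : ℝ) / ((σs : ℝ) * σz + (σz : ℝ) * σe + (σs : ℝ) * σe)) ≤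
      (n : ENNReal)⁻¹ * ∑ i : Fin n,
        ∫⁻ ω, ENNReal.ofReal
          ((ω.2.1 i -
            f (fun j => ω.2.2 j - ω.2.1 j, fun j => ω.1 j + ω.2.1 j) i) ^ 2)
          ∂(gaussTriple σs σe σz n) := by
  have hs := hσs.ne'
  have he := hσe.ne'
  have hz := hσz.ne'
  set c : ℝ≥0∞ := ENNReal.ofReal
    ((σz * σs * σe : ℝ) / ((σs : ℝ) * σz + (σz : ℝ) * σe + (σs : ℝ) * σe)) with hc_def
  set γs := gaussianReal 0 σs with hγs
  set γe := gaussianReal 0 σe with hγe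
  set γz := gaussianReal 0 σz with hγz
  set PS := Measure.pi fun _ : Fin n => γs with hPS
  set PE := Measure.pi fun _ : Fin n => γe with hPE
  set PZ := Measure.pi fun _ : Fin n => γz with hPZ
  have key : ∀ i : Fin n, c ≤
      ∫⁻ ω, ENNReal.ofReal
        ((ω.2.1 i - f (fun j => ω.2.2 j - ω.2.1 j, fun j => ω.1 j + ω.2.1 j) i) ^ 2)
        ∂(gaussTriple σs σe σz n) := by
    intro i
    -- the integrand
    set G : (Fin n → ℝ) × (Fin n → ℝ) × (Fin n → ℝ) → ℝ≥0∞ := fun ω =>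
      ENNReal.ofReal
        ((ω.2.1 i - f (fun j => ω.2.2 j - ω.2.1 j, fun j => ω.1 j + ω.2.1 j) i) ^ 2) with hG_def
    have hGm : Measurable G := by
      apply ENNReal.measurable_ofReal.comp
      apply Measurable.pow_const
      refine ((measurable_pi_apply i).comp (measurable_fst.comp measurable_snd)).sub ?_
      refine (measurable_pi_apply i).comp (hf.comp (Measurable.prodMk ?_ ?_))
      · exact measurable_pi_lambda _ fun j =>
          ((measurable_pi_apply j).comp (measurable_snd.comp measurable_snd)).sub
            ((measurable_pi_apply j).comp (measurable_fst.comp measurable_snd))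
      · exact measurable_pi_lambda _ fun j =>
          ((measurable_pi_apply j).comp measurable_fst).add
            ((measurable_pi_apply j).comp (measurable_fst.comp measurable_snd))
    -- the measure-preserving reassembly map
    have hupdS := measurePreserving_updatePeel (fun _ : Fin n => γs) i
    have hupdE := measurePreserving_updatePeel (fun _ : Fin n => γe) i
    have hupdZ := measurePreserving_updatePeel (fun _ : Fin n => γz) i
    have tp1 := measurePreserving_transpose γs (γe.prod γz) PS (PE.prod PZ)
    have tp2 := measurePreserving_transpose γe γz PE PZ
    have step2 := (MeasurePreserving.id (γs.prod PS)).prod tp2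
    have step3 := hupdS.prod (hupdE.prod hupdZ)
    have Ψmp := step3.comp (step2.comp tp1)
    refine le_trans ?_ (le_of_eq (Ψmp.lintegral_comp hGm))
    refine le_trans ?_
      (le_of_eq (lintegral_prod_symm _ ((hGm.comp Ψmp.measurable).aemeasurable)).symm)
    -- now bound the inner integral for every fixed tail
    have hin : ∀ Y : (Fin n → ℝ) × ((Fin n → ℝ) × (Fin n → ℝ)),
        c ≤ ∫⁻ X : ℝ × (ℝ × ℝ),
          G (Function.update Y.1 i X.1,
            (Function.update Y.2.1 i X.2.1, Function.update Y.2.2 i X.2.2))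
          ∂(γs.prod (γe.prod γz)) := by
      rintro ⟨S, E, Z⟩
      set g : ℝ × ℝ → ℝ := fun u =>
        f (Function.update (fun j => Z j - E j) i u.1,
           Function.update (fun j => S j + E j) i u.2) i with hg_def
      have hgm : Measurable g := by
        refine (measurable_pi_apply i).comp (hf.comp (Measurable.prodMk ?_ ?_))
        · exact (measurable_update _).comp measurable_fst
        · exact (measurable_update _).comp measurable_snd
      have hcb := core_bound σs σe σz hs he hz g hgm
      rw [hc_def]
      refine le_trans hcb (le_of_eq ?_)
      refine lintegral_congr fun X => ?_
      obtain ⟨s, e, z⟩ := X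
      rw [hG_def]
      simp only []
      have h1 : Function.update E i e i = e := Function.update_self i e E
      have h2 : (fun j => Function.update Z i z j - Function.update E i e j)
          = Function.update (fun j => Z j - E j) i (z - e) := by
        funext j
        rcases eq_or_ne j i with rfl | hj
        · simp
        · simp [Function.update_of_ne hj]
      have h3 : (fun j => Function.update S i s j + Function.update E i e j)
          = Function.update (fun j => S j + E j) i (s + e) := by
        funext j
        rcases eq_or_ne j i with rfl | hj
        · simp
        · simp [Function.update_of_ne hj]
      rw [h1, h2, h3]
    calc c = ∫⁻ _, c ∂(PS.prod (PE.prod PZ)) := by simp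
      _ ≤ _ := lintegral_mono fun Y =>
          le_trans (hin Y) (le_of_eq (lintegral_congr fun X => rfl))
  -- conclude by averaging
  have hsum : (n : ℝ≥0∞) * c ≤ ∑ i : Fin n,
      ∫⁻ ω, ENNReal.ofReal
        ((ω.2.1 i - f (fun j => ω.2.2 j - ω.2.1 j, fun j => ω.1 j + ω.2.1 j) i) ^ 2)
        ∂(gaussTriple σs σe σz n) := by
    calc (n : ℝ≥0∞) * c = ∑ _i : Fin n, c := by
          rw [Finset.sum_const, Finset.card_univ, Fintype.card_fin, nsmul_eq_mul]
      _ ≤ _ := Finset.sum_le_sum fun i _ => key i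
  calc c = (n : ℝ≥0∞)⁻¹ * ((n : ℝ≥0∞) * c) := by
        rw [← mul_assoc, ENNReal.inv_mul_cancel (by exact_mod_cast hn.ne')
          (ENNReal.natCast_ne_top n), one_mul]
    _ ≤ _ := by gcongr

end ISAC
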